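/- Every automorphism of sl₂(F) is inner: if σ : L → L is an automorphism of the Lie algebra L = sl₂(F), then there exists an invertible matrix M ∈ Mat₂(F) such that y^σ = M y M⁻¹ for all y ∈ L. -/

import Mathlib

open Matrix LieAlgebra.SpecialLinear

section Aux

variable {F : Type*} [Field F]

/-- A 2×2 matrix with zero trace whose square has zero trace squares to zero (char ≠ 2). -/
lemma aux_sq_zero (hchar : (2 : F) ≠ 0) (E : Matrix (Fin 2) (Fin 2) F)
    (h0 : Matrix.trace E = 0) (h1 : Matrix.trace (E * E) = 0) : E * E = 0 := by
  rw [Matrix.trace_fin_two] at h0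
  rw [Matrix.trace_fin_two] at h1
  simp only [Matrix.mul_apply, Fin.sum_univ_two] at h1
  have hkey : E 0 0 * E 0 0 + E 0 1 * E 1 0 = 0 := by
    have h2 : (2:F) * (E 0 0 * E 0 0 + E 0 1 * E 1 0) = 0 := by
      linear_combination h1 - (E 1 1 - E 0 0) * h0
    exact (mul_eq_zero.mp h2).resolve_left hchar
  ext i j
  simp only [Matrix.mul_apply, Fin.sum_univ_two, Matrix.zero_apply]
  fin_cases i <;> fin_cases j <;> simp only [Fin.mk_zero, Fin.mk_one]
  · linear_combination hkey
  · linear_combination E 0 1 * h0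
  · linear_combination E 1 0 * h0
  · linear_combination hkey + (E 1 1 - E 0 0) * h0

lemma aux_span (y : Matrix (Fin 2) (Fin 2) F) (ht : y 0 0 + y 1 1 = 0) :
    y = y 0 1 • !![(0:F),1;0,0] + y 1 0 • !![(0:F),0;1,0] + y 0 0 • !![(1:F),0;0,-1] := by
  ext i j
  fin_cases i <;> fin_cases j <;>
    (simp [Fin.mk_zero, Fin.mk_one, Matrix.vecHead]; try linear_combination ht)

lemma aux_col_mulVec (A B : Matrix (Fin 2) (Fin 2) F) (j : Fin 2) :
    (A *ᵥ (fun i => B i j)) = fun i => (A * B) i j := by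
  funext i; simp [Matrix.mulVec, Matrix.mul_apply, dotProduct]

end Aux

set_option maxHeartbeats 2000000 in
/-- Every automorphism of `sl₂(F)` is inner: if `σ` is an automorphism of the Lie algebra
`L = sl₂(F)` (an `F`-linear bijection preserving the bracket), then there is an invertible
matrix `M ∈ Mat₂(F)` with `σ y = M y M⁻¹` for all `y ∈ L`. -/
theorem stmt0 (F : Type*) [Field F] [IsAlgClosed F] (hchar : (2 : F) ≠ 0)
    (σ : sl (Fin 2) F ≃ₗ[F] sl (Fin 2) F)
    (hσ : ∀ y z : sl (Fin 2) F, σ ⁅y, z⁆ = ⁅σ y, σ z⁆) :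
    ∃ M : Matrix (Fin 2) (Fin 2) F, IsUnit M ∧
      ∀ y : sl (Fin 2) F,
        ((σ y : Matrix (Fin 2) (Fin 2) F)) = M * (y : Matrix (Fin 2) (Fin 2) F) * M⁻¹ := by
  classical
  -- the standard basis of sl₂
  have meme : (!![(0:F),1;0,0]) ∈ sl (Fin 2) F := by
    have : Matrix.trace (!![(0:F),1;0,0]) = 0 := by simp [Matrix.trace_fin_two]
    exact this
  have memf : (!![(0:F),0;1,0]) ∈ sl (Fin 2) F := by
    have : Matrix.trace (!![(0:F),0;1,0]) = 0 := by simp [Matrix.trace_fin_two]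
    exact this
  have memh : (!![(1:F),0;0,-1]) ∈ sl (Fin 2) F := by
    have : Matrix.trace (!![(1:F),0;0,-1]) = 0 := by simp [Matrix.trace_fin_two]
    exact this
  set e : sl (Fin 2) F := ⟨_, meme⟩ with he_def
  set f : sl (Fin 2) F := ⟨_, memf⟩ with hf_def
  set h : sl (Fin 2) F := ⟨_, memh⟩ with hh_def
  -- bracket relations
  have bhe : ⁅h, e⁆ = (2:F) • e := by
    apply Subtype.ext
    show (h : Matrix (Fin 2) (Fin 2) F) * e - e * h = (2:F) • (e : Matrix (Fin 2) (Fin 2) F)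
    simp [he_def, hh_def]
    norm_num
  have bhf : ⁅h, f⁆ = (-2:F) • f := by
    apply Subtype.ext
    show (h : Matrix (Fin 2) (Fin 2) F) * f - f * h = (-2:F) • (f : Matrix (Fin 2) (Fin 2) F)
    simp [hf_def, hh_def]
    refine ⟨by norm_num, ?_⟩
    ext i
    fin_cases i
    simp
  have bef : ⁅e, f⁆ = h := by
    apply Subtype.ext
    show (e : Matrix (Fin 2) (Fin 2) F) * f - f * e = (h : Matrix (Fin 2) (Fin 2) F)
    simp [he_def, hf_def, hh_def]
  -- images of the basis elements, as matrices
  set Em : Matrix (Fin 2) (Fin 2) F := (σ e : Matrix (Fin 2) (Fin 2) F) with hEm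
  set Fm : Matrix (Fin 2) (Fin 2) F := (σ f : Matrix (Fin 2) (Fin 2) F) with hFm
  set H : Matrix (Fin 2) (Fin 2) F := (σ h : Matrix (Fin 2) (Fin 2) F) with hH
  -- matrix-level bracket relations
  have r1 : H * Em - Em * H = (2:F) • Em := by
    have := hσ h e
    rw [bhe, _root_.map_smul] at this
    have := congrArg Subtype.val this
    simpa [Ring.lie_def] using this.symm
  have r2 : H * Fm - Fm * H = (-2:F) • Fm := by
    have := hσ h f
    rw [bhf, _root_.map_smul] at this
    have := congrArg Subtype.val this
    simpa [Ring.lie_def] using this.symm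
  have r3 : Em * Fm - Fm * Em = H := by
    have := hσ e f
    rw [bef] at this
    have := congrArg Subtype.val this
    simpa [Ring.lie_def] using this.symm
  -- E is a nonzero matrix
  have hEne : Em ≠ 0 := by
    intro h0
    have h1 : σ e = 0 := Subtype.ext h0
    have h2 : e = 0 := by
      have := congrArg σ.symm h1
      simpa using this
    have h3 := congrArg (fun y : sl (Fin 2) F => (y : Matrix (Fin 2) (Fin 2) F) 0 1) h2
    simp [he_def] at h3
  -- E and F are square-zero
  have trEE : Matrix.trace (Em * Em) = 0 := by
    have t1 : Matrix.trace (Em * (H * Em - Em * H)) = (2:F) * Matrix.trace (Em * Em) := by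
      rw [r1, mul_smul_comm, Matrix.trace_smul, smul_eq_mul]
    have t2 : Matrix.trace (Em * (H * Em - Em * H)) = 0 := by
      rw [mul_sub, Matrix.trace_sub, ← mul_assoc, ← mul_assoc,
        Matrix.trace_mul_cycle Em H Em, sub_self]
    rw [t2] at t1
    exact ((mul_eq_zero.mp t1.symm).resolve_left hchar)
  have hE2 : Em * Em = 0 := aux_sq_zero hchar Em (σ e).2 trEE
  have trFF : Matrix.trace (Fm * Fm) = 0 := by
    have t1 : Matrix.trace (Fm * (H * Fm - Fm * H)) = (-2:F) * Matrix.trace (Fm * Fm) := by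
      rw [r2, mul_smul_comm, Matrix.trace_smul, smul_eq_mul]
    have t2 : Matrix.trace (Fm * (H * Fm - Fm * H)) = 0 := by
      rw [mul_sub, Matrix.trace_sub, ← mul_assoc, ← mul_assoc,
        Matrix.trace_mul_cycle Fm H Fm, sub_self]
    rw [t2] at t1
    exact ((mul_eq_zero.mp t1.symm).resolve_left (neg_ne_zero.mpr hchar))
  have hF2 : Fm * Fm = 0 := aux_sq_zero hchar Fm (σ f).2 trFF
  have hE2' : ∀ X : Matrix (Fin 2) (Fin 2) F, Em * (Em * X) = 0 := fun X => by
    rw [← mul_assoc, hE2, zero_mul]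
  -- E * F * E = E
  have hEFE : Em * Fm * Em = Em := by
    have key : (2:F) • (Em * Fm * Em) = (2:F) • Em := by
      rw [← r1, ← r3]
      simp [sub_mul, mul_sub, mul_assoc, hE2', hE2, two_smul]
    exact smul_right_injective _ hchar key
  -- the idempotent P = E * F and a column vector in its image
  set P : Matrix (Fin 2) (Fin 2) F := Em * Fm with hPdef
  have hPP : P * P = P := by
    rw [hPdef, show Em * Fm * (Em * Fm) = (Em * Fm * Em) * Fm by noncomm_ring, hEFE]
  have hPne : P ≠ 0 := by
    intro h0
    apply hEne
    rw [← hEFE]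
    show P * Em = 0
    rw [h0, zero_mul]
  obtain ⟨i0, j0, hij⟩ : ∃ i j, P i j ≠ 0 := by
    by_contra hc
    push_neg at hc
    exact hPne (by ext i j; simpa using hc i j)
  set v : Fin 2 → F := fun i => P i j0 with hvdef
  set w : Fin 2 → F := Fm *ᵥ v with hwdef
  have hEP : Em * P = 0 := by rw [hPdef, ← mul_assoc, hE2, zero_mul]
  have hEv : Em *ᵥ v = 0 := by
    rw [hvdef, aux_col_mulVec, hEP]
    funext i; simp
  have hPv : P *ᵥ v = v := by
    rw [hvdef, aux_col_mulVec, hPP]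
  have hEw : Em *ᵥ w = v := by
    rw [hwdef, Matrix.mulVec_mulVec, ← hPdef, hPv]
  have hFw : Fm *ᵥ w = 0 := by
    rw [hwdef, Matrix.mulVec_mulVec, hF2, Matrix.zero_mulVec]
  have hvne : v ≠ 0 := by
    intro h0
    exact hij (by rw [← show v i0 = P i0 j0 from rfl, h0]; rfl)
  -- the conjugating matrix
  set M : Matrix (Fin 2) (Fin 2) F := Matrix.of (fun i => ![v i, w i]) with hMdef
  have hMv : ∀ x : Fin 2 → F, M *ᵥ x = x 0 • v + x 1 • w := by
    intro x; funext i
    simp [hMdef, Matrix.mulVec, dotProduct, Fin.sum_univ_two]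
    ring
  have hdet : M.det ≠ 0 := by
    intro hd
    obtain ⟨x, hx0, hx⟩ := (Matrix.exists_mulVec_eq_zero_iff).mpr hd
    rw [hMv] at hx
    have h1 : x 1 • v = 0 := by
      have h2 := congrArg (fun z => Em *ᵥ z) hx
      simpa [Matrix.mulVec_add, Matrix.mulVec_smul, hEv, hEw] using h2
    have hx1 : x 1 = 0 := ((smul_eq_zero.mp h1).resolve_right hvne)
    have hx0' : x 0 = 0 := by
      rw [hx1, zero_smul, add_zero] at hx
      exact ((smul_eq_zero.mp hx).resolve_right hvne)
    apply hx0
    funext i; fin_cases i <;> assumption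
  have hdu : IsUnit M.det := isUnit_iff_ne_zero.mpr hdet
  have hMunit : IsUnit M := (Matrix.isUnit_iff_isUnit_det M).mpr hdu
  have hMinv : M * M⁻¹ = 1 := Matrix.mul_nonsing_inv M hdu
  -- conjugation identities on the basis
  have hcol : ∀ A : Matrix (Fin 2) (Fin 2) F, A * M = Matrix.of (fun i => ![(A *ᵥ v) i, (A *ᵥ w) i]) := by
    intro A
    ext i j
    fin_cases j <;>
      simp [hMdef, Matrix.mul_apply, Matrix.mulVec, dotProduct, Fin.sum_univ_two]
  have hEM : Em * M = M * e.val := by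
    rw [hcol, hEv, hEw]
    ext i j
    fin_cases j <;>
      simp [hMdef, he_def, Matrix.mul_apply, Fin.sum_univ_two]
  have hFM : Fm * M = M * f.val := by
    rw [hcol, hFw]
    have : Fm *ᵥ v = w := hwdef.symm
    rw [this]
    ext i j
    fin_cases j <;>
      simp [hMdef, hf_def, Matrix.mul_apply, Fin.sum_univ_two]
  have hHM : H * M = M * h.val := by
    have hval : h.val = e.val * f.val - f.val * e.val := by
      ext i j
      fin_cases i <;> fin_cases j <;>
        simp [he_def, hf_def, hh_def, Matrix.mul_apply, Fin.sum_univ_two]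
    rw [← r3, hval]
    calc (Em * Fm - Fm * Em) * M = Em * (Fm * M) - Fm * (Em * M) := by noncomm_ring
    _ = Em * (M * f.val) - Fm * (M * e.val) := by rw [hFM, hEM]
    _ = (Em * M) * f.val - (Fm * M) * e.val := by noncomm_ring
    _ = (M * e.val) * f.val - (M * f.val) * e.val := by rw [hEM, hFM]
    _ = M * (e.val * f.val - f.val * e.val) := by noncomm_ring
  have conj : ∀ (A : Matrix (Fin 2) (Fin 2) F) (b : sl (Fin 2) F),
      A * M = M * b.val → A = M * b.val * M⁻¹ := by
    intro A b hb
    calc A = A * (M * M⁻¹) := by rw [hMinv, mul_one]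
    _ = (A * M) * M⁻¹ := by rw [mul_assoc]
    _ = M * b.val * M⁻¹ := by rw [hb]
  have cE : Em = M * e.val * M⁻¹ := conj _ _ hEM
  have cF : Fm = M * f.val * M⁻¹ := conj _ _ hFM
  have cH : H = M * h.val * M⁻¹ := conj _ _ hHM
  -- decomposition of an arbitrary element
  have coe3 : ∀ (a b c : F) (x y z : sl (Fin 2) F),
      ((a • x + b • y + c • z : sl (Fin 2) F) : Matrix (Fin 2) (Fin 2) F)
        = a • (x : Matrix (Fin 2) (Fin 2) F) + b • (y : Matrix (Fin 2) (Fin 2) F)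
          + c • (z : Matrix (Fin 2) (Fin 2) F) := fun _ _ _ _ _ _ => rfl
  have span : ∀ y : sl (Fin 2) F, ∃ a b c : F, y = a • e + b • f + c • h := by
    intro y
    refine ⟨(y : Matrix (Fin 2) (Fin 2) F) 0 1, (y : Matrix (Fin 2) (Fin 2) F) 1 0,
      (y : Matrix (Fin 2) (Fin 2) F) 0 0, ?_⟩
    have ht : Matrix.trace (y : Matrix (Fin 2) (Fin 2) F) = 0 := y.2
    rw [Matrix.trace_fin_two] at ht
    apply Subtype.ext
    rw [coe3]
    exact aux_span (y : Matrix (Fin 2) (Fin 2) F) ht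
  refine ⟨M, hMunit, fun y => ?_⟩
  obtain ⟨a, b, c, hy⟩ := span y
  rw [hy, map_add, map_add, _root_.map_smul, _root_.map_smul, _root_.map_smul, coe3, coe3,
    ← hEm, ← hFm, ← hH, cE, cF, cH]
  simp only [Matrix.mul_add, Matrix.add_mul, mul_smul_comm, smul_mul_assoc]
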